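/- In Γ = F₂^{⊕ℤ} ⋊ ℤ, if A, B ⊆ ℤ are disjoint, then H_A ∩ H_B is trivial; consequently, there exist co-amenable subgroups H₁, H₂ of the non-amenable group Γ with trivial (hence non-co-amenable) intersection, namely H_A and H_B for disjoint A, B each containing arbitrarily long intervals. -/

import Mathlib

open scoped Pointwise

/-- The free group on two generators. -/
abbrev F2 := FreeGroup (Fin 2)

/-- The restricted direct product `F₂^{⊕ℤ}`, as the subgroup of finitely supported
elements of `∏_{i∈ℤ} F₂`. -/
def Gsupp : Subgroup (ℤ → F2) where
  carrier := {f | {i : ℤ | f i ≠ 1}.Finite}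
  one_mem' := by simp
  mul_mem' := by
    intro f g hf hg
    refine (hf.union hg).subset fun i hi => ?_
    by_contra h
    simp only [Set.mem_union, Set.mem_setOf_eq, not_or, not_not] at h
    exact hi (by simp [Pi.mul_apply, h.1, h.2])
  inv_mem' := by
    intro f hf
    refine hf.subset fun i hi => ?_
    simp only [Set.mem_setOf_eq, Pi.inv_apply] at hi ⊢
    intro h
    exact hi (by simp [h])

/-- The shift automorphism of `∏_{i∈ℤ} F₂` by `n`. -/
def shiftPi (n : ℤ) : (ℤ → F2) ≃* (ℤ → F2) where
  toFun f := fun i => f (i - n)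
  invFun f := fun i => f (i + n)
  left_inv f := by ext i; simp
  right_inv f := by ext i; simp
  map_mul' f g := rfl

/-- The shift automorphism of `F₂^{⊕ℤ}` by `n`. -/
def shiftG (n : ℤ) : Gsupp ≃* Gsupp where
  toFun f := ⟨shiftPi n f, by
    refine ((f.2.image (· + n)).subset fun i hi => ?_)
    exact ⟨i - n, hi, by ring⟩⟩
  invFun f := ⟨shiftPi (-n) f, by
    refine ((f.2.image (· + -n)).subset fun i hi => ?_)
    exact ⟨i - -n, by simpa [shiftPi] using hi, by ring⟩⟩
  left_inv f := by
    ext i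
    simp [shiftPi]
  right_inv f := by
    ext i
    simp [shiftPi]
  map_mul' f g := rfl

/-- The shift action of `ℤ` on `F₂^{⊕ℤ}` as a homomorphism into the automorphism
group. -/
def shiftHom : Multiplicative ℤ →* MulAut ↥Gsupp where
  toFun n := shiftG (Multiplicative.toAdd n)
  map_one' := by
    ext f i
    simp [shiftG, shiftPi]
  map_mul' m n := by
    ext f i
    simp [shiftG, shiftPi, sub_sub]

/-- The wreath-type product `Γ = F₂^{⊕ℤ} ⋊ ℤ`. -/
abbrev WGamma := Gsupp ⋊[shiftHom] Multiplicative ℤ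

/-- The element of `F₂^{⊕ℤ}` equal to `w` in coordinate `0` and trivial elsewhere. -/
def delta0 (w : F2) : Gsupp :=
  ⟨fun i => if i = 0 then w else 1, by
    refine (Set.finite_singleton (0 : ℤ)).subset fun i hi => ?_
    by_contra h
    simp only [Set.mem_singleton_iff] at h
    simp [h] at hi⟩

/-- The generator `a` (the first free generator in coordinate `0`). -/
def aGen : WGamma := SemidirectProduct.inl (delta0 (FreeGroup.of 0))

/-- The generator `b` (the second free generator in coordinate `0`). -/
def bGen : WGamma := SemidirectProduct.inl (delta0 (FreeGroup.of 1))

/-- The generator `s` (the shift). -/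
def sGen : WGamma := SemidirectProduct.inr (Multiplicative.ofAdd (1 : ℤ))

/-- The symmetric generating set `S = {s^{±1}, a^{±1}, b^{±1}}`. -/
noncomputable def SGen : Finset WGamma := by
  classical exact {sGen, aGen, bGen, sGen⁻¹, aGen⁻¹, bGen⁻¹}

/-- The subgroup `H_E = F₂^{⊕E}` of elements supported on `E ⊆ ℤ` with trivial
`ℤ`-component. -/
def HE (E : Set ℤ) : Subgroup WGamma where
  carrier := {x | x.right = 1 ∧ ∀ i : ℤ, i ∉ E → (x.left : ℤ → F2) i = 1}
  one_mem' := by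
    constructor
    · rfl
    · intro i _
      rfl
  mul_mem' := by
    rintro x y ⟨hx1, hx2⟩ ⟨hy1, hy2⟩
    constructor
    · simp [SemidirectProduct.mul_right, hx1, hy1]
    · intro i hi
      have : ((x * y).left : ℤ → F2) i
          = (x.left : ℤ → F2) i * ((shiftHom x.right y.left : Gsupp) : ℤ → F2) i := rfl
      rw [this, hx2 i hi, one_mul, hx1]
      simpa using hy2 i hi
  inv_mem' := by
    rintro x ⟨hx1, hx2⟩
    constructor
    · simp [SemidirectProduct.inv_right, hx1]
    · intro i hi
      have h1 : ((x⁻¹).left : ℤ → F2) i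
          = ((shiftHom x.right⁻¹ x.left⁻¹ : Gsupp) : ℤ → F2) i := rfl
      rw [h1, hx1, inv_one, map_one]
      simp [hx2 i hi]

/-- A subgroup `H ≤ Γ` is co-amenable (w.r.t. `S`) if the Schreier graph of the coset
space satisfies the Følner condition. -/
def Coamenable (H : Subgroup WGamma) : Prop :=
  ∀ ε : ℝ, 0 < ε → ∃ F : Finset (WGamma ⧸ H), F.Nonempty ∧
    ((((SGen : Set WGamma) • (F : Set (WGamma ⧸ H))) \ (F : Set (WGamma ⧸ H))).ncard : ℝ)
      ≤ ε * F.card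

open SemidirectProduct Pointwise

noncomputable section AuxNA

lemma delta0_apply (w : F2) (i : ℤ) :
    ((delta0 w : Gsupp) : ℤ → F2) i = if i = 0 then w else 1 := rfl

lemma delta0_inv (w : F2) : (delta0 w)⁻¹ = delta0 w⁻¹ := by
  apply Subtype.ext
  funext i
  show ((delta0 w : Gsupp) : ℤ → F2)⁻¹ i = _
  rw [Pi.inv_apply, delta0_apply, delta0_apply]
  split <;> simp

lemma head_letter_mul (i : Fin 2) (b : Bool) (w : F2) :
    (FreeGroup.mk [(i, b)] * w).toWord.head? = some (i, b) ∨
      w.toWord.head? = some (i, !b) := by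
  have h1 : FreeGroup.mk [(i, b)] * w = FreeGroup.mk ((i, b) :: w.toWord) := by
    conv_lhs => rw [← FreeGroup.mk_toWord (x := w)]
    rw [FreeGroup.mul_mk]
    rfl
  rw [h1, FreeGroup.toWord_mk, FreeGroup.reduce.cons, FreeGroup.reduce_toWord]
  cases hw : w.toWord with
  | nil => left; rfl
  | cons hd tl =>
    by_cases hc : (i, b).1 = hd.1 ∧ (i, b).2 = !hd.2
    · right
      obtain ⟨h1', h2'⟩ := hc
      simp only [List.head?_cons]
      cases hd with
      | mk j c => simp_all
    · left
      simp only [hc, if_false]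
      rfl

/-- The generator letters. -/
def genIB (i : Fin 2) (b : Bool) : WGamma := inl (delta0 (FreeGroup.mk [(i, b)]))

lemma genIB_true (i : Fin 2) : genIB i true = if i = 0 then aGen else bGen := by
  fin_cases i
  · simp [genIB, aGen, FreeGroup.of]
  · simp [genIB, bGen, FreeGroup.of]

lemma genIB_false (i : Fin 2) : genIB i false = (genIB i true)⁻¹ := by
  unfold genIB
  rw [← map_inv, delta0_inv]
  congr 1

lemma genIB_mem_SGen (i : Fin 2) (b : Bool) : genIB i b ∈ SGen := by
  classical
  cases b
  · rw [genIB_false, genIB_true]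
    fin_cases i <;> simp [SGen]
  · rw [genIB_true]
    fin_cases i <;> simp [SGen]

/-- first letter of the coordinate-0 word -/
def flW (γ : WGamma) : Option (Fin 2 × Bool) := ((γ.left : ℤ → F2) 0).toWord.head?

lemma left_genIB_mul (i : Fin 2) (b : Bool) (γ : WGamma) :
    ((genIB i b * γ).left : ℤ → F2) 0 = FreeGroup.mk [(i, b)] * (γ.left : ℤ → F2) 0 := by
  show (((inl (delta0 (FreeGroup.mk [(i, b)])) : WGamma) * γ).left : ℤ → F2) 0 = _
  rw [mul_left, left_inl, right_inl, map_one]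
  show ((delta0 (FreeGroup.mk [(i, b)]) : Gsupp) : ℤ → F2) 0 * _ = _
  rw [delta0_apply]
  norm_num

lemma flmul (i : Fin 2) (b : Bool) (γ : WGamma) :
    flW (genIB i b * γ) = some (i, b) ∨ flW γ = some (i, !b) := by
  unfold flW
  rw [left_genIB_mul]
  exact head_letter_mul i b _

lemma nonamenable_step (F : Finset WGamma) (i : Fin 2) :
    F.card ≤ (F.filter (fun γ => flW γ = some (i, true))).card
      + (F.filter (fun γ => flW γ = some (i, false))).card
      + (((SGen : Set WGamma) • (F : Set WGamma)) \ (F : Set WGamma)).ncard := by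
  classical
  set g := genIB i false with hg
  set T := F.filter (fun γ => ¬ flW γ = some (i, true)) with hT
  set G' := (F.image (fun γ => g * γ)).filter (fun γ => flW γ = some (i, false)) with hG'
  have hfin : (((SGen : Set WGamma) • (F : Set WGamma)) \ (F : Set WGamma)).Finite :=
    (SGen.finite_toSet.smul F.finite_toSet).diff
  have hTG' : T.card ≤ G'.card := by
    apply Finset.card_le_card_of_injOn (fun γ => g * γ)
    · intro γ hγ
      replace hγ : γ ∈ T := hγ
      show g * γ ∈ G'
      simp only [hT, Finset.mem_filter] at hγ
      rcases flmul i false γ with h | h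
      · simp only [hG', Finset.mem_filter]
        exact ⟨Finset.mem_image_of_mem _ hγ.1, h⟩
      · exact absurd (by simpa using h) hγ.2
    · intro x _ y _ h
      exact mul_left_cancel h
  have h1 : G'.card = (G'.filter (· ∈ F)).card + (G'.filter (· ∉ F)).card :=
    (Finset.card_filter_add_card_filter_not _).symm
  have h2 : (G'.filter (· ∈ F)) ⊆ F.filter (fun γ => flW γ = some (i, false)) := by
    intro x hx
    simp only [Finset.mem_filter, hG'] at hx ⊢
    exact ⟨hx.2, hx.1.2⟩
  have h3 : ((G'.filter (· ∉ F)) : Set WGamma) ⊆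
      ((SGen : Set WGamma) • (F : Set WGamma)) \ (F : Set WGamma) := by
    intro x hx
    simp only [Finset.coe_filter, Set.mem_setOf_eq, Finset.mem_filter, hG',
      Finset.mem_image] at hx
    obtain ⟨⟨⟨γ, hγ, rfl⟩, -⟩, hnot⟩ := hx
    refine ⟨?_, by simpa using hnot⟩
    exact Set.mem_smul.mpr ⟨g, Finset.mem_coe.mpr (genIB_mem_SGen i false),
      γ, Finset.mem_coe.mpr hγ, rfl⟩
  have h4 : (G'.filter (· ∉ F)).card ≤
      (((SGen : Set WGamma) • (F : Set WGamma)) \ (F : Set WGamma)).ncard := by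
    rw [← Set.ncard_coe_finset]
    exact Set.ncard_le_ncard h3 hfin
  have h5 : F.card = (F.filter (fun γ => flW γ = some (i, true))).card + T.card :=
    (Finset.card_filter_add_card_filter_not _).symm
  have := Finset.card_le_card h2
  omega

lemma filter_disjoint_flW (F : Finset WGamma) (v v' : Option (Fin 2 × Bool)) (h : v ≠ v') :
    Disjoint (F.filter (fun γ => flW γ = v)) (F.filter (fun γ => flW γ = v')) := by
  classical
  refine Finset.disjoint_left.mpr fun x hx hx' => ?_
  simp only [Finset.mem_filter] at hx hx'
  exact h (hx.2 ▸ hx'.2 ▸ rfl)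

lemma not_folner_WGamma : ¬ (∀ ε : ℝ, 0 < ε → ∃ F : Finset WGamma, F.Nonempty ∧
    ((((SGen : Set WGamma) • (F : Set WGamma)) \ (F : Set WGamma)).ncard : ℝ)
      ≤ ε * F.card) := by
  classical
  intro h
  obtain ⟨F, hFne, hF⟩ := h (1/4) (by norm_num)
  set D := (((SGen : Set WGamma) • (F : Set WGamma)) \ (F : Set WGamma)).ncard with hD
  have h0 := nonamenable_step F 0
  have h1 := nonamenable_step F 1
  set c0t := F.filter (fun γ => flW γ = some ((0 : Fin 2), true)) with hc0t
  set c0f := F.filter (fun γ => flW γ = some ((0 : Fin 2), false)) with hc0f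
  set c1t := F.filter (fun γ => flW γ = some ((1 : Fin 2), true)) with hc1t
  set c1f := F.filter (fun γ => flW γ = some ((1 : Fin 2), false)) with hc1f
  have hsum : c0t.card + c0f.card + c1t.card + c1f.card ≤ F.card := by
    have d1 : Disjoint c0t c0f := filter_disjoint_flW F _ _ (by simp)
    have d2 : Disjoint c1t c1f := filter_disjoint_flW F _ _ (by simp)
    have d3 : Disjoint (c0t ∪ c0f) (c1t ∪ c1f) := by
      simp only [Finset.disjoint_union_left, Finset.disjoint_union_right]
      refine ⟨⟨?_, ?_⟩, ?_, ?_⟩ <;>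
        exact filter_disjoint_flW F _ _ (by simp [Fin.ext_iff])
    calc c0t.card + c0f.card + c1t.card + c1f.card
        = ((c0t ∪ c0f) ∪ (c1t ∪ c1f)).card := by
          rw [Finset.card_union_of_disjoint d3, Finset.card_union_of_disjoint d1,
            Finset.card_union_of_disjoint d2]
          ring
      _ ≤ F.card := Finset.card_le_card (by
          intro x hx
          simp only [Finset.mem_union, hc0t, hc0f, hc1t, hc1f, Finset.mem_filter] at hx
          rcases hx with (h | h) | (h | h) <;> exact h.1)
  have hcard : 0 < F.card := Finset.card_pos.mpr hFne
  have hDle : F.card ≤ 2 * D := by omega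
  have hr1 : (F.card : ℝ) ≤ 2 * D := by exact_mod_cast hDle
  have hr2 : (1 : ℝ) ≤ F.card := by exact_mod_cast hcard
  nlinarith [hF]

end AuxNA


noncomputable section AuxCoam

def sP (k : ℤ) : WGamma := inr (Multiplicative.ofAdd k)

lemma sP_mul (k l : ℤ) : sP k * sP l = sP (k + l) := by
  unfold sP
  rw [← map_mul]
  rfl

lemma sP_inv (k : ℤ) : (sP k)⁻¹ = sP (-k) := by
  unfold sP
  rw [← map_inv]
  rfl

def qA (A : Set ℤ) (j : ℤ) : WGamma ⧸ HE A := QuotientGroup.mk (sP (-j))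

lemma qA_inj (A : Set ℤ) : Function.Injective (qA A) := by
  intro j l h
  rw [qA, qA, QuotientGroup.eq] at h
  rw [sP_inv, sP_mul] at h
  obtain ⟨h1, -⟩ := h
  have h2 : (Multiplicative.ofAdd (- -j + -l)) = 1 := h1
  have h3 : - -j + -l = 0 := by exact_mod_cast congrArg Multiplicative.toAdd h2
  omega

lemma conj_mem_HE (A : Set ℤ) (w : F2) (j : ℤ) (hj : j ∈ A) :
    (sP (-j))⁻¹ * ((inl (delta0 w) : WGamma) * sP (-j)) ∈ HE A := by
  refine ⟨?_, ?_⟩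
  · show ((sP (-j))⁻¹ * ((inl (delta0 w) : WGamma) * sP (-j))).right = 1
    simp [sP]
  · intro i hi
    have hij : i ≠ j := fun h => hi (h ▸ hj)
    have hL : (((sP (-j))⁻¹ * ((inl (delta0 w) : WGamma) * sP (-j))).left : ℤ → F2) i
        = ((delta0 w : Gsupp) : ℤ → F2) (i - j) := by
      simp only [sP, mul_left, inv_left, inv_right, left_inl, right_inl, left_inr, right_inr,
        inv_one, map_one, one_mul, mul_one, MulAut.one_apply, toAdd_inv, toAdd_ofAdd, neg_neg]
      show ((delta0 w : Gsupp) : ℤ → F2)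
        (i - Multiplicative.toAdd (Multiplicative.ofAdd (-j))⁻¹) = _
      norm_num
    rw [hL, delta0_apply, if_neg (by omega)]

lemma smul_qA_gen (A : Set ℤ) (w : F2) (j : ℤ) (hj : j ∈ A) :
    (inl (delta0 w) : WGamma) • qA A j = qA A j := by
  show QuotientGroup.mk ((inl (delta0 w) : WGamma) * sP (-j)) = QuotientGroup.mk (sP (-j))
  rw [QuotientGroup.eq, mul_inv_rev, mul_assoc, ← map_inv, delta0_inv]
  exact conj_mem_HE A w⁻¹ j hj

lemma smul_qA_s (A : Set ℤ) (j : ℤ) : sGen • qA A j = qA A (j - 1) := by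
  show QuotientGroup.mk (sP 1 * sP (-j)) = QuotientGroup.mk (sP (-(j - 1)))
  rw [sP_mul]
  have e : 1 + -j = -(j - 1) := by ring
  rw [e]

lemma smul_qA_sinv (A : Set ℤ) (j : ℤ) : sGen⁻¹ • qA A j = qA A (j + 1) := by
  have h : sGen⁻¹ = sP (-1) := by
    show (sP 1)⁻¹ = sP (-1)
    rw [sP_inv]
  rw [h]
  show QuotientGroup.mk (sP (-1) * sP (-j)) = QuotientGroup.mk (sP (-(j + 1)))
  rw [sP_mul]
  have e : -1 + -j = -(j + 1) := by ring
  rw [e]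

lemma coamenable_HE (A : Set ℤ) (h : ∀ n : ℕ, ∃ a : ℤ, Set.Icc a (a + n) ⊆ A) :
    Coamenable (HE A) := by
  classical
  intro ε hε
  obtain ⟨n, hn⟩ : ∃ n : ℕ, 2 ≤ ε * (n + 1) := by
    refine ⟨⌈2/ε⌉₊, ?_⟩
    have h1 : 2/ε ≤ (⌈2/ε⌉₊ : ℝ) := Nat.le_ceil _
    have h2 : ε * (2/ε) = 2 := by field_simp
    nlinarith
  obtain ⟨a, ha⟩ := h n
  set F : Finset (WGamma ⧸ HE A) := (Finset.Icc a (a + n)).image (qA A) with hFdef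
  have hmemF : ∀ j : ℤ, a ≤ j → j ≤ a + n → qA A j ∈ F := by
    intro j h1 h2
    exact Finset.mem_image_of_mem _ (Finset.mem_Icc.mpr ⟨h1, h2⟩)
  refine ⟨F, Finset.Nonempty.image (Finset.nonempty_Icc.mpr (by omega)) _, ?_⟩
  have hcard : F.card = n + 1 := by
    rw [hFdef, Finset.card_image_of_injective _ (qA_inj A), Int.card_Icc]
    omega
  have hsub : (((SGen : Set WGamma) • (F : Set (WGamma ⧸ HE A))) \ (F : Set (WGamma ⧸ HE A)))
      ⊆ {qA A (a - 1), qA A (a + n + 1)} := by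
    rintro x ⟨hx1, hx2⟩
    obtain ⟨g, hg, y, hy, rfl⟩ := Set.mem_smul.mp hx1
    obtain ⟨j, hj, rfl⟩ : ∃ j, j ∈ Finset.Icc a (a + n) ∧ qA A j = y := by
      simpa [hFdef] using hy
    obtain ⟨hj1, hj2⟩ := Finset.mem_Icc.mp hj
    have hjA : j ∈ A := ha (Set.mem_Icc.mpr ⟨hj1, hj2⟩)
    have hg' : g = sGen ∨ g = aGen ∨ g = bGen ∨ g = sGen⁻¹ ∨ g = aGen⁻¹ ∨ g = bGen⁻¹ := by
      simpa [SGen] using hg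
    have haG : aGen • qA A j = qA A j := smul_qA_gen A (FreeGroup.of 0) j hjA
    have hbG : bGen • qA A j = qA A j := smul_qA_gen A (FreeGroup.of 1) j hjA
    have haG' : aGen⁻¹ • qA A j = qA A j := by
      have e : aGen⁻¹ = (inl (delta0 (FreeGroup.of 0)⁻¹) : WGamma) := by
        rw [← delta0_inv, map_inv]
        rfl
      rw [e]
      exact smul_qA_gen A (FreeGroup.of 0)⁻¹ j hjA
    have hbG' : bGen⁻¹ • qA A j = qA A j := by
      have e : bGen⁻¹ = (inl (delta0 (FreeGroup.of 1)⁻¹) : WGamma) := by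
        rw [← delta0_inv, map_inv]
        rfl
      rw [e]
      exact smul_qA_gen A (FreeGroup.of 1)⁻¹ j hjA
    rcases hg' with rfl | rfl | rfl | rfl | rfl | rfl
    · rw [smul_qA_s] at hx2 ⊢
      by_cases hja : j = a
      · left
        rw [hja]
      · exact absurd (Finset.mem_coe.mpr (hmemF (j - 1) (by omega) (by omega))) hx2
    · exact absurd (haG ▸ Finset.mem_coe.mpr (hmemF j hj1 hj2)) (haG ▸ hx2)
    · exact absurd (hbG ▸ Finset.mem_coe.mpr (hmemF j hj1 hj2)) (hbG ▸ hx2)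
    · rw [smul_qA_sinv] at hx2 ⊢
      by_cases hja : j = a + n
      · right
        rw [hja]
        rfl
      · exact absurd (Finset.mem_coe.mpr (hmemF (j + 1) (by omega) (by omega))) hx2
    · exact absurd (haG' ▸ Finset.mem_coe.mpr (hmemF j hj1 hj2)) (haG' ▸ hx2)
    · exact absurd (hbG' ▸ Finset.mem_coe.mpr (hmemF j hj1 hj2)) (hbG' ▸ hx2)
  have hncard : (((SGen : Set WGamma) • (F : Set (WGamma ⧸ HE A)))
      \ (F : Set (WGamma ⧸ HE A))).ncard ≤ 2 := by
    refine le_trans (Set.ncard_le_ncard hsub ((Set.finite_singleton _).insert _)) ?_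
    refine le_trans (Set.ncard_insert_le _ _) ?_
    simp
  calc ((((SGen : Set WGamma) • (F : Set (WGamma ⧸ HE A)))
      \ (F : Set (WGamma ⧸ HE A))).ncard : ℝ) ≤ 2 := by exact_mod_cast hncard
    _ ≤ ε * (n + 1) := hn
    _ = ε * F.card := by rw [hcard]; push_cast; ring

end AuxCoam


open Classical in
/-- In `Γ = F₂^{⊕ℤ} ⋊ ℤ`: (i) if `A, B ⊆ ℤ` are disjoint then
`H_A ∩ H_B` is trivial; (ii) `Γ` is non-amenable (it fails the Følner condition w.r.t.
the generating set `S`); and consequently (iii) there exist co-amenable subgroups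
`H₁, H₂` of `Γ` with trivial intersection. -/
theorem disjoint_supports_trivial_intersection_and_counterexample :
    (∀ A B : Set ℤ, Disjoint A B → HE A ⊓ HE B = ⊥) ∧
    ¬ (∀ ε : ℝ, 0 < ε → ∃ F : Finset WGamma, F.Nonempty ∧
        ((((SGen : Set WGamma) • (F : Set WGamma)) \ (F : Set WGamma)).ncard : ℝ)
          ≤ ε * F.card) ∧
    ∃ A B : Set ℤ, Disjoint A B ∧
      (∀ n : ℕ, ∃ a : ℤ, Set.Icc a (a + n) ⊆ A) ∧
      (∀ n : ℕ, ∃ a : ℤ, Set.Icc a (a + n) ⊆ B) ∧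
      Coamenable (HE A) ∧ Coamenable (HE B) ∧ HE A ⊓ HE B = ⊥ := by
  have part1 : ∀ A B : Set ℤ, Disjoint A B → HE A ⊓ HE B = ⊥ := by
    intro A B hAB
    rw [Subgroup.eq_bot_iff_forall]
    intro x hx
    obtain ⟨⟨hr, hA⟩, ⟨-, hB⟩⟩ := Subgroup.mem_inf.mp hx
    have hleft : x.left = 1 := by
      apply Subtype.ext
      funext i
      show (x.left : ℤ → F2) i = 1
      by_cases hiA : i ∈ A
      · exact hB i (fun hiB => Set.disjoint_left.mp hAB hiA hiB)
      · exact hA i hiA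
    obtain ⟨l, r⟩ := x
    have hl : l = 1 := hleft
    have hr' : r = 1 := hr
    rw [hl, hr']
    rfl
  refine ⟨part1, not_folner_WGamma, {z : ℤ | 0 ≤ z}, {z : ℤ | z < 0}, ?_, ?_, ?_, ?_, ?_, ?_⟩
  · exact Set.disjoint_left.mpr fun z hz hz' => by
      simp only [Set.mem_setOf_eq] at hz hz'
      omega
  · intro n
    refine ⟨0, fun x hx => ?_⟩
    obtain ⟨h1, -⟩ := Set.mem_Icc.mp hx
    exact h1
  · intro n
    refine ⟨-(n + 1), fun x hx => ?_⟩
    obtain ⟨-, h2⟩ := Set.mem_Icc.mp hx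
    show x < 0
    omega
  · exact coamenable_HE _ (fun n => ⟨0, fun x hx => (Set.mem_Icc.mp hx).1⟩)
  · exact coamenable_HE _ (fun n => ⟨-(n + 1), fun x hx => show x < 0 by
      have := (Set.mem_Icc.mp hx).2
      omega⟩)
  · exact part1 _ _ (Set.disjoint_left.mpr fun z hz hz' => by
      simp only [Set.mem_setOf_eq] at hz hz'
      omega)
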